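/- There exist CHSH-type boxes R_1, R_2, R_3 such that R_1 and R_2 are incomparable under LOSR, R_2 and R_3 are incomparable under LOSR, but R_1 converts to R_3 under LOSR with R_3 not converting to R_1. Hence the incomparability relation of the LOSR pre-order on common-cause boxes is not transitive (the pre-order is not a weak order), and in particular the pre-order is not total. -/

import Mathlib

open Finset

noncomputable section

abbrev Box : Type := Fin 2 → Fin 2 → Fin 2 → Fin 2 → ℝ

/-- A type-preserving operation on CHSH-type boxes: `τ x' y' s t x y s' t'`. -/
abbrev Op : Type :=
  Fin 2 → Fin 2 → Fin 2 → Fin 2 → Fin 2 → Fin 2 → Fin 2 → Fin 2 → ℝ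

def sgn : Fin 2 → ℝ := fun a => if a = 0 then 1 else -1

def corr (R : Box) (s t : Fin 2) : ℝ := ∑ x, ∑ y, sgn x * sgn y * R x y s t

def CHSH (R : Box) : ℝ := corr R 0 0 + corr R 1 0 + corr R 0 1 - corr R 1 1

def IsBox (R : Box) : Prop :=
  (∀ x y s t, 0 ≤ R x y s t) ∧ (∀ s t, ∑ x, ∑ y, R x y s t = 1) ∧
  (∀ x s t t', ∑ y, R x y s t = ∑ y, R x y s t') ∧
  (∀ y t s s', ∑ x, R x y s t = ∑ x, R x y s' t)

def IsFree (R : Box) : Prop :=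
  ∃ (n : ℕ) (p : Fin n → ℝ) (qA qB : Fin n → Fin 2 → Fin 2 → ℝ),
    (∀ i, 0 ≤ p i) ∧ (∑ i, p i = 1) ∧
    (∀ i x s, 0 ≤ qA i x s) ∧ (∀ i s, ∑ x, qA i x s = 1) ∧
    (∀ i y t, 0 ≤ qB i y t) ∧ (∀ i t, ∑ y, qB i y t = 1) ∧
    ∀ x y s t, R x y s t = ∑ i, p i * qA i x s * qB i y t

def IsSignPattern (σ : Fin 2 → Fin 2 → ℝ) : Prop :=
  (∀ s t, σ s t = 1 ∨ σ s t = -1) ∧ σ 0 0 * σ 1 0 * σ 0 1 * σ 1 1 = -1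

def CHSHk (σ : Fin 2 → Fin 2 → ℝ) (R : Box) : ℝ := ∑ s, ∑ t, σ s t * corr R s t

/-- An LOSR operation (local operations and shared randomness). -/
def IsLOSR (τ : Op) : Prop :=
  ∃ (n : ℕ) (p : Fin n → ℝ)
    (pA pB : Fin n → Fin 2 → Fin 2 → Fin 2 → Fin 2 → ℝ),
    (∀ i, 0 ≤ p i) ∧ (∑ i, p i = 1) ∧
    (∀ i x' s x s', 0 ≤ pA i x' s x s') ∧
    (∀ i x s', ∑ x', ∑ s, pA i x' s x s' = 1) ∧
    (∀ i y' t y t', 0 ≤ pB i y' t y t') ∧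
    (∀ i y t', ∑ y', ∑ t, pB i y' t y t' = 1) ∧
    (∀ i x₁ x₂ s s', ∑ x', pA i x' s x₁ s' = ∑ x', pA i x' s x₂ s') ∧
    (∀ i y₁ y₂ t t', ∑ y', pB i y' t y₁ t' = ∑ y', pB i y' t y₂ t') ∧
    (∀ x' y' s t x y s' t',
      τ x' y' s t x y s' t' = ∑ i, p i * pA i x' s x s' * pB i y' t y t')

def applyOp (τ : Op) (R : Box) : Box := fun x' y' s' t' =>
  ∑ x, ∑ y, ∑ s, ∑ t, τ x' y' s t x y s' t' * R x y s t

def Conv (R R' : Box) : Prop := ∃ τ : Op, IsLOSR τ ∧ applyOp τ R = R'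


-- chunk 1: basics
abbrev Strat : Type := Fin 2 → Fin 2 × Fin 2 × Fin 2

def inp (σ : Strat) (s' : Fin 2) : Fin 2 := (σ s').1

def outf (σ : Strat) (x s' : Fin 2) : Fin 2 := if x = 0 then (σ s').2.1 else (σ s').2.2

def dApp (σa σb : Strat) (R : Box) : Box := fun x' y' s' t' =>
  ∑ x, ∑ y, (if outf σa x s' = x' then (1:ℝ) else 0) *
    (if outf σb y t' = y' then (1:ℝ) else 0) * R x y (inp σa s') (inp σb t')

def margA (R : Box) (s : Fin 2) : ℝ := ∑ x, ∑ y, sgn x * R x y s 0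

def margB (R : Box) (t : Fin 2) : ℝ := ∑ x, ∑ y, sgn y * R x y 0 t

def sstar : Fin 2 → Fin 2 → ℝ := fun s t => if s = 1 ∧ t = 1 then -1 else 1

def Phi (κ : ℝ) (R : Box) : ℝ :=
  CHSHk sstar R + κ * (margA R 0 + margA R 1 + margB R 0 + margB R 1)

lemma sstar_pattern : IsSignPattern sstar := by
  constructor
  · intro s t; fin_cases s <;> fin_cases t <;> simp [sstar]
  · simp [sstar]

lemma sgn_pm (z : Fin 2) : sgn z = 1 ∨ sgn z = -1 := by
  fin_cases z <;> simp [sgn]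

lemma sgn_sq (z : Fin 2) : sgn z * sgn z = 1 := by
  fin_cases z <;> norm_num [sgn]

lemma abs_sgn (z : Fin 2) : |sgn z| = 1 := by
  fin_cases z <;> norm_num [sgn]

lemma sgn_ne (a b : Fin 2) (h : a ≠ b) : sgn a = - sgn b := by
  fin_cases a <;> fin_cases b <;> simp_all [sgn]

lemma fin2_class (a b : Fin 2) (h : a ≠ b) : (a = 0 ∧ b = 1) ∨ (a = 1 ∧ b = 0) := by
  fin_cases a <;> fin_cases b <;> simp_all

lemma fin2_eq (a : Fin 2) : a = 0 ∨ a = 1 := by fin_cases a <;> simp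


lemma corr_dApp (σa σb : Strat) (R : Box) (s' t' : Fin 2) :
    corr (dApp σa σb R) s' t' =
      ∑ x, ∑ y, sgn (outf σa x s') * sgn (outf σb y t') * R x y (inp σa s') (inp σb t') := by
  unfold corr dApp
  simp only [Fin.sum_univ_two]
  rcases fin2_eq (outf σa 0 s') with h1 | h1 <;> rcases fin2_eq (outf σa 1 s') with h2 | h2 <;>
    rcases fin2_eq (outf σb 0 t') with h3 | h3 <;> rcases fin2_eq (outf σb 1 t') with h4 | h4 <;>
    simp [h1, h2, h3, h4, sgn] <;> ring

lemma margA_dApp (σa σb : Strat) (R : Box) (s' : Fin 2) :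
    margA (dApp σa σb R) s' =
      ∑ x, ∑ y, sgn (outf σa x s') * R x y (inp σa s') (inp σb 0) := by
  unfold margA dApp
  simp only [Fin.sum_univ_two]
  rcases fin2_eq (outf σa 0 s') with h1 | h1 <;> rcases fin2_eq (outf σa 1 s') with h2 | h2 <;>
    rcases fin2_eq (outf σb 0 0) with h3 | h3 <;> rcases fin2_eq (outf σb 1 0) with h4 | h4 <;>
    simp [h1, h2, h3, h4, sgn] <;> ring

lemma margB_dApp (σa σb : Strat) (R : Box) (t' : Fin 2) :
    margB (dApp σa σb R) t' =
      ∑ x, ∑ y, sgn (outf σb y t') * R x y (inp σa 0) (inp σb t') := by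
  unfold margB dApp
  simp only [Fin.sum_univ_two]
  rcases fin2_eq (outf σa 0 0) with h1 | h1 <;> rcases fin2_eq (outf σa 1 0) with h2 | h2 <;>
    rcases fin2_eq (outf σb 0 t') with h3 | h3 <;> rcases fin2_eq (outf σb 1 t') with h4 | h4 <;>
    simp [h1, h2, h3, h4, sgn] <;> ring

-- chunk 2: good case
lemma sgn_out_good (σa : Strat) (s' : Fin 2) (h : outf σa 0 s' ≠ outf σa 1 s') :
    sgn (outf σa 1 s') = - sgn (outf σa 0 s') := sgn_ne _ _ (Ne.symm h)

lemma sgn0 : sgn 0 = 1 := by simp [sgn]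
lemma sgn1 : sgn 1 = -1 := by simp [sgn]

lemma corr_dApp_good (σa σb : Strat) (R : Box) (s' t' : Fin 2)
    (ha : outf σa 0 s' ≠ outf σa 1 s') (hb : outf σb 0 t' ≠ outf σb 1 t') :
    corr (dApp σa σb R) s' t' =
      sgn (outf σa 0 s') * sgn (outf σb 0 t') * corr R (inp σa s') (inp σb t') := by
  rw [corr_dApp]
  unfold corr
  simp only [Fin.sum_univ_two, sgn_out_good σa s' ha, sgn_out_good σb t' hb, sgn0, sgn1]
  ring

lemma margA_dApp_good (σa σb : Strat) (R : Box) (hR : IsBox R) (s' : Fin 2)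
    (ha : outf σa 0 s' ≠ outf σa 1 s') :
    margA (dApp σa σb R) s' = sgn (outf σa 0 s') * margA R (inp σa s') := by
  rw [margA_dApp]
  calc ∑ x, ∑ y, sgn (outf σa x s') * R x y (inp σa s') (inp σb 0)
      = ∑ x, sgn (outf σa x s') * ∑ y, R x y (inp σa s') (inp σb 0) := by
        refine Finset.sum_congr rfl fun x _ => ?_; rw [Finset.mul_sum]
    _ = ∑ x, sgn (outf σa x s') * ∑ y, R x y (inp σa s') 0 := by
        refine Finset.sum_congr rfl fun x _ => ?_; rw [hR.2.2.1 x _ _ 0]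
    _ = sgn (outf σa 0 s') * margA R (inp σa s') := by
        unfold margA
        simp only [Fin.sum_univ_two, sgn_out_good σa s' ha, sgn0, sgn1]
        ring

lemma margB_dApp_good (σa σb : Strat) (R : Box) (hR : IsBox R) (t' : Fin 2)
    (hb : outf σb 0 t' ≠ outf σb 1 t') :
    margB (dApp σa σb R) t' = sgn (outf σb 0 t') * margB R (inp σb t') := by
  rw [margB_dApp]
  rw [Finset.sum_comm]
  calc ∑ y, ∑ x, sgn (outf σb y t') * R x y (inp σa 0) (inp σb t')
      = ∑ y, sgn (outf σb y t') * ∑ x, R x y (inp σa 0) (inp σb t') := by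
        refine Finset.sum_congr rfl fun y _ => ?_; rw [Finset.mul_sum]
    _ = ∑ y, sgn (outf σb y t') * ∑ x, R x y 0 (inp σb t') := by
        refine Finset.sum_congr rfl fun y _ => ?_; rw [hR.2.2.2 y _ _ 0]
    _ = sgn (outf σb 0 t') * margB R (inp σb t') := by
        unfold margB
        rw [Finset.sum_comm]
        simp only [Fin.sum_univ_two, sgn_out_good σb t' hb, sgn0, sgn1]
        ring

lemma good_case (R : Box) (hR : IsBox R) (σ : Fin 2 → Fin 2 → ℝ) (hσ : IsSignPattern σ)
    (σa σb : Strat)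
    (ha1 : inp σa 0 ≠ inp σa 1) (ha2 : ∀ s', outf σa 0 s' ≠ outf σa 1 s')
    (hb1 : inp σb 0 ≠ inp σb 1) (hb2 : ∀ t', outf σb 0 t' ≠ outf σb 1 t') :
    ∃ σ' : Fin 2 → Fin 2 → ℝ, ∃ εA εB : Fin 2 → ℝ,
      IsSignPattern σ' ∧ (∀ s, εA s = 1 ∨ εA s = -1) ∧ (∀ t, εB t = 1 ∨ εB t = -1) ∧
      CHSHk σ (dApp σa σb R) = CHSHk σ' R ∧
      margA (dApp σa σb R) 0 + margA (dApp σa σb R) 1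
        = εA 0 * margA R 0 + εA 1 * margA R 1 ∧
      margB (dApp σa σb R) 0 + margB (dApp σa σb R) 1
        = εB 0 * margB R 0 + εB 1 * margB R 1 := by
  refine ⟨fun s t => σ (inp σa s) (inp σb t) * sgn (outf σa 0 (inp σa s)) * sgn (outf σb 0 (inp σb t)),
      fun s => sgn (outf σa 0 (inp σa s)), fun t => sgn (outf σb 0 (inp σb t)),
      ⟨?_, ?_⟩, fun s => sgn_pm _, fun t => sgn_pm _, ?_, ?_, ?_⟩
  · intro s t
    dsimp only
    rcases hσ.1 (inp σa s) (inp σb t) with h | h <;>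
      rcases sgn_pm (outf σa 0 (inp σa s)) with h2 | h2 <;>
      rcases sgn_pm (outf σb 0 (inp σb t)) with h3 | h3 <;>
      rw [h, h2, h3] <;> norm_num
  · dsimp only
    rcases fin2_class _ _ ha1 with ⟨e0, e1⟩ | ⟨e0, e1⟩ <;>
      rcases fin2_class _ _ hb1 with ⟨f0, f1⟩ | ⟨f0, f1⟩ <;>
      rw [e0, e1, f0, f1] <;>
      calc _ = (σ 0 0 * σ 1 0 * σ 0 1 * σ 1 1) *
            ((sgn (outf σa 0 0) * sgn (outf σa 0 0)) * ((sgn (outf σa 0 1) * sgn (outf σa 0 1)) *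
             ((sgn (outf σb 0 0) * sgn (outf σb 0 0)) * (sgn (outf σb 0 1) * sgn (outf σb 0 1))))) := by
              ring
        _ = -1 := by rw [hσ.2, sgn_sq, sgn_sq, sgn_sq, sgn_sq]; norm_num
  · have hc : ∀ s' t', corr (dApp σa σb R) s' t' =
        sgn (outf σa 0 s') * sgn (outf σb 0 t') * corr R (inp σa s') (inp σb t') :=
      fun s' t' => corr_dApp_good σa σb R s' t' (ha2 s') (hb2 t')
    unfold CHSHk
    simp only [hc]
    rcases fin2_class _ _ ha1 with ⟨e0, e1⟩ | ⟨e0, e1⟩ <;>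
      rcases fin2_class _ _ hb1 with ⟨f0, f1⟩ | ⟨f0, f1⟩ <;>
      simp only [Fin.sum_univ_two, e0, e1, f0, f1] <;> ring
  · rw [margA_dApp_good σa σb R hR 0 (ha2 0), margA_dApp_good σa σb R hR 1 (ha2 1)]
    rcases fin2_class _ _ ha1 with ⟨e0, e1⟩ | ⟨e0, e1⟩ <;> simp only [e0, e1] <;> ring
  · rw [margB_dApp_good σa σb R hR 0 (hb2 0), margB_dApp_good σa σb R hR 1 (hb2 1)]
    rcases fin2_class _ _ hb1 with ⟨f0, f1⟩ | ⟨f0, f1⟩ <;> simp only [f0, f1] <;> ring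

-- chunk 3: degenerate case
lemma abs2 (a b c d u v : ℝ) (ha : a = 1 ∨ a = -1) (hb : b = 1 ∨ b = -1)
    (hc : c = 1 ∨ c = -1) (hd : d = 1 ∨ d = -1) (hu : u = 1 ∨ u = -1) (hv : v = 1 ∨ v = -1)
    (hprod : a * b * c * d = -1) : |a * u + b * v| + |c * u + d * v| = 2 := by
  rcases ha with h | h <;> subst h <;> rcases hb with h | h <;> subst h <;>
    rcases hc with h | h <;> subst h <;> rcases hd with h | h <;> subst h <;>
    rcases hu with h | h <;> subst h <;> rcases hv with h | h <;> subst h <;>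
    (revert hprod; norm_num)

lemma key_alice (R : Box) (hR : IsBox R) (σ : Fin 2 → Fin 2 → ℝ) (hσ : IsSignPattern σ)
    (w e : Fin 2 → Fin 2 → ℝ) (hw : ∀ s' x, w s' x = 1 ∨ w s' x = -1)
    (he : ∀ t' y, e t' y = 1 ∨ e t' y = -1)
    (sA : Fin 2 → Fin 2) (hsA : sA 0 = sA 1) (tB : Fin 2 → Fin 2) :
    ∑ s', ∑ t', σ s' t' * ∑ x, ∑ y, w s' x * e t' y * R x y (sA s') (tB t') ≤ 2 := by
  have habs : ∀ x, |σ 0 0 * w 0 x + σ 1 0 * w 1 x| + |σ 0 1 * w 0 x + σ 1 1 * w 1 x| = 2 :=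
    fun x => abs2 _ _ _ _ _ _ (hσ.1 0 0) (hσ.1 1 0) (hσ.1 0 1) (hσ.1 1 1)
      (hw 0 x) (hw 1 x) hσ.2
  calc ∑ s', ∑ t', σ s' t' * ∑ x, ∑ y, w s' x * e t' y * R x y (sA s') (tB t')
      = ∑ t', ∑ x, ∑ y, (σ 0 t' * w 0 x + σ 1 t' * w 1 x) * e t' y * R x y (sA 1) (tB t') := by
        simp only [Fin.sum_univ_two]; rw [hsA]; ring
    _ ≤ ∑ t', ∑ x, ∑ y, |σ 0 t' * w 0 x + σ 1 t' * w 1 x| * R x y (sA 1) (tB t') := by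
        refine Finset.sum_le_sum fun t' _ => ?_
        refine Finset.sum_le_sum fun x _ => ?_
        refine Finset.sum_le_sum fun y _ => ?_
        have h1 : (σ 0 t' * w 0 x + σ 1 t' * w 1 x) * e t' y
            ≤ |σ 0 t' * w 0 x + σ 1 t' * w 1 x| := by
          rcases he t' y with h | h <;> rw [h]
          · simpa using le_abs_self (σ 0 t' * w 0 x + σ 1 t' * w 1 x)
          · have := neg_abs_le (σ 0 t' * w 0 x + σ 1 t' * w 1 x); linarith
        exact mul_le_mul_of_nonneg_right h1 (hR.1 _ _ _ _)
    _ = ∑ t', ∑ x, |σ 0 t' * w 0 x + σ 1 t' * w 1 x| * ∑ y, R x y (sA 1) 0 := by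
        refine Finset.sum_congr rfl fun t' _ => Finset.sum_congr rfl fun x _ => ?_
        rw [← Finset.mul_sum, hR.2.2.1 x _ _ 0]
    _ = ∑ x, (|σ 0 0 * w 0 x + σ 1 0 * w 1 x| + |σ 0 1 * w 0 x + σ 1 1 * w 1 x|)
          * ∑ y, R x y (sA 1) 0 := by
        rw [Fin.sum_univ_two, ← Finset.sum_add_distrib]
        exact Finset.sum_congr rfl fun x _ => by ring
    _ = ∑ x, 2 * ∑ y, R x y (sA 1) 0 := by
        exact Finset.sum_congr rfl fun x _ => by rw [habs x]
    _ = 2 := by rw [← Finset.mul_sum, hR.2.1]; norm_num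

lemma key_bob (R : Box) (hR : IsBox R) (σ : Fin 2 → Fin 2 → ℝ) (hσ : IsSignPattern σ)
    (w e : Fin 2 → Fin 2 → ℝ) (hw : ∀ s' x, w s' x = 1 ∨ w s' x = -1)
    (he : ∀ t' y, e t' y = 1 ∨ e t' y = -1)
    (sA : Fin 2 → Fin 2) (tB : Fin 2 → Fin 2) (htB : tB 0 = tB 1) :
    ∑ s', ∑ t', σ s' t' * ∑ x, ∑ y, w s' x * e t' y * R x y (sA s') (tB t') ≤ 2 := by
  have habs : ∀ y, |σ 0 0 * e 0 y + σ 0 1 * e 1 y| + |σ 1 0 * e 0 y + σ 1 1 * e 1 y| = 2 :=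
    fun y => abs2 _ _ _ _ _ _ (hσ.1 0 0) (hσ.1 0 1) (hσ.1 1 0) (hσ.1 1 1)
      (he 0 y) (he 1 y) (by linear_combination hσ.2)
  calc ∑ s', ∑ t', σ s' t' * ∑ x, ∑ y, w s' x * e t' y * R x y (sA s') (tB t')
      = ∑ s', ∑ y, ∑ x, (σ s' 0 * e 0 y + σ s' 1 * e 1 y) * w s' x * R x y (sA s') (tB 1) := by
        simp only [Fin.sum_univ_two]; rw [htB]; ring
    _ ≤ ∑ s', ∑ y, ∑ x, |σ s' 0 * e 0 y + σ s' 1 * e 1 y| * R x y (sA s') (tB 1) := by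
        refine Finset.sum_le_sum fun s' _ => ?_
        refine Finset.sum_le_sum fun y _ => ?_
        refine Finset.sum_le_sum fun x _ => ?_
        have h1 : (σ s' 0 * e 0 y + σ s' 1 * e 1 y) * w s' x
            ≤ |σ s' 0 * e 0 y + σ s' 1 * e 1 y| := by
          rcases hw s' x with h | h <;> rw [h]
          · simpa using le_abs_self (σ s' 0 * e 0 y + σ s' 1 * e 1 y)
          · have := neg_abs_le (σ s' 0 * e 0 y + σ s' 1 * e 1 y); linarith
        exact mul_le_mul_of_nonneg_right h1 (hR.1 _ _ _ _)
    _ = ∑ s', ∑ y, |σ s' 0 * e 0 y + σ s' 1 * e 1 y| * ∑ x, R x y 0 (tB 1) := by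
        refine Finset.sum_congr rfl fun s' _ => Finset.sum_congr rfl fun y _ => ?_
        rw [← Finset.mul_sum, hR.2.2.2 y _ _ 0]
    _ = ∑ y, (|σ 0 0 * e 0 y + σ 0 1 * e 1 y| + |σ 1 0 * e 0 y + σ 1 1 * e 1 y|)
          * ∑ x, R x y 0 (tB 1) := by
        rw [Fin.sum_univ_two, ← Finset.sum_add_distrib]
        exact Finset.sum_congr rfl fun y _ => by ring
    _ = ∑ y, 2 * ∑ x, R x y 0 (tB 1) := by
        exact Finset.sum_congr rfl fun y _ => by rw [habs y]
    _ = 2 := by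
        rw [← Finset.mul_sum, Finset.sum_comm, hR.2.1]; norm_num

lemma inner_subst (R : Box) (hR : IsBox R) (c : ℝ) (e : Fin 2 → ℝ) (S S' T : Fin 2) :
    ∑ x, ∑ y, c * e y * R x y S T = ∑ x, ∑ y, c * e y * R x y S' T := by
  have key : ∀ Z : Fin 2, ∑ x, ∑ y, c * e y * R x y Z T = ∑ y, (c * e y) * ∑ x, R x y Z T := by
    intro Z
    rw [Finset.sum_comm]
    exact Finset.sum_congr rfl fun y _ => by rw [Finset.mul_sum]
  rw [key S, key S']
  exact Finset.sum_congr rfl fun y _ => by rw [hR.2.2.2 y T S S']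

lemma inner_subst_B (R : Box) (hR : IsBox R) (c : ℝ) (w : Fin 2 → ℝ) (S T T' : Fin 2) :
    ∑ x, ∑ y, w x * c * R x y S T = ∑ x, ∑ y, w x * c * R x y S T' := by
  have key : ∀ Z : Fin 2, ∑ x, ∑ y, w x * c * R x y S Z = ∑ x, (w x * c) * ∑ y, R x y S Z := by
    intro Z
    exact Finset.sum_congr rfl fun x _ => by rw [Finset.mul_sum]
  rw [key T, key T']
  exact Finset.sum_congr rfl fun x _ => by rw [hR.2.2.1 x S T T']

lemma chsh_dApp_form (σ : Fin 2 → Fin 2 → ℝ) (σa σb : Strat) (R : Box) :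
    CHSHk σ (dApp σa σb R) =
      ∑ s', ∑ t', σ s' t' * ∑ x, ∑ y,
        sgn (outf σa x s') * sgn (outf σb y t') * R x y (inp σa s') (inp σb t') := by
  unfold CHSHk
  simp only [corr_dApp]

lemma deg_alice (R : Box) (hR : IsBox R) (σ : Fin 2 → Fin 2 → ℝ) (hσ : IsSignPattern σ)
    (σa σb : Strat)
    (h : inp σa 0 = inp σa 1 ∨ ∃ s'0, outf σa 0 s'0 = outf σa 1 s'0) :
    CHSHk σ (dApp σa σb R) ≤ 2 := by
  rw [chsh_dApp_form]
  have hw : ∀ (s' x : Fin 2), sgn (outf σa x s') = 1 ∨ sgn (outf σa x s') = -1 :=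
    fun s' x => sgn_pm _
  have he : ∀ (t' y : Fin 2), sgn (outf σb y t') = 1 ∨ sgn (outf σb y t') = -1 :=
    fun t' y => sgn_pm _
  by_cases h1 : inp σa 0 = inp σa 1
  · exact key_alice R hR σ hσ (fun s' x => sgn (outf σa x s')) (fun t' y => sgn (outf σb y t'))
      hw he (fun s' => inp σa s') h1 (fun t' => inp σb t')
  · rcases h with h | ⟨s'0, hrow⟩
    · exact absurd h h1
    · have hcx : ∀ x, sgn (outf σa x s'0) = sgn (outf σa 0 s'0) := by
        intro x
        rcases fin2_eq x with hx | hx <;> subst hx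
        · rfl
        · rw [← hrow]
      rcases fin2_eq s'0 with hs | hs <;> subst hs
      · -- row 0 constant, use input of row 1
        have crux : (∑ s', ∑ t', (σ s' t' * ∑ x, ∑ y,
              sgn (outf σa x s') * sgn (outf σb y t') * R x y (inp σa s') (inp σb t')))
            = ∑ s', ∑ t', σ s' t' * ∑ x, ∑ y,
              sgn (outf σa x s') * sgn (outf σb y t') * R x y ((fun _ => inp σa 1) s') (inp σb t') := by
          refine Finset.sum_congr rfl fun s' _ => Finset.sum_congr rfl fun t' _ => ?_
          rcases fin2_eq s' with hs' | hs' <;> subst hs'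
          · congr 1
            simp only [hcx]
            exact inner_subst R hR _ (fun y => sgn (outf σb y t')) _ _ _
          · rfl
        rw [crux]
        exact key_alice R hR σ hσ (fun s' x => sgn (outf σa x s')) (fun t' y => sgn (outf σb y t'))
          hw he (fun _ => inp σa 1) rfl (fun t' => inp σb t')
      · -- row 1 constant, use input of row 0
        have crux : (∑ s', ∑ t', (σ s' t' * ∑ x, ∑ y,
              sgn (outf σa x s') * sgn (outf σb y t') * R x y (inp σa s') (inp σb t')))
            = ∑ s', ∑ t', σ s' t' * ∑ x, ∑ y,
              sgn (outf σa x s') * sgn (outf σb y t') * R x y ((fun _ => inp σa 0) s') (inp σb t') := by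
          refine Finset.sum_congr rfl fun s' _ => Finset.sum_congr rfl fun t' _ => ?_
          rcases fin2_eq s' with hs' | hs' <;> subst hs'
          · rfl
          · congr 1
            simp only [hcx]
            exact inner_subst R hR _ (fun y => sgn (outf σb y t')) _ _ _
        rw [crux]
        exact key_alice R hR σ hσ (fun s' x => sgn (outf σa x s')) (fun t' y => sgn (outf σb y t'))
          hw he (fun _ => inp σa 0) rfl (fun t' => inp σb t')

lemma deg_bob (R : Box) (hR : IsBox R) (σ : Fin 2 → Fin 2 → ℝ) (hσ : IsSignPattern σ)
    (σa σb : Strat)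
    (h : inp σb 0 = inp σb 1 ∨ ∃ t'0, outf σb 0 t'0 = outf σb 1 t'0) :
    CHSHk σ (dApp σa σb R) ≤ 2 := by
  rw [chsh_dApp_form]
  have hw : ∀ (s' x : Fin 2), sgn (outf σa x s') = 1 ∨ sgn (outf σa x s') = -1 :=
    fun s' x => sgn_pm _
  have he : ∀ (t' y : Fin 2), sgn (outf σb y t') = 1 ∨ sgn (outf σb y t') = -1 :=
    fun t' y => sgn_pm _
  by_cases h1 : inp σb 0 = inp σb 1
  · exact key_bob R hR σ hσ (fun s' x => sgn (outf σa x s')) (fun t' y => sgn (outf σb y t'))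
      hw he (fun s' => inp σa s') (fun t' => inp σb t') h1
  · rcases h with h | ⟨t'0, hrow⟩
    · exact absurd h h1
    · have hcy : ∀ y, sgn (outf σb y t'0) = sgn (outf σb 0 t'0) := by
        intro y
        rcases fin2_eq y with hy | hy <;> subst hy
        · rfl
        · rw [← hrow]
      rcases fin2_eq t'0 with ht | ht <;> subst ht
      · have crux : (∑ s', ∑ t', (σ s' t' * ∑ x, ∑ y,
              sgn (outf σa x s') * sgn (outf σb y t') * R x y (inp σa s') (inp σb t')))
            = ∑ s', ∑ t', σ s' t' * ∑ x, ∑ y,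
              sgn (outf σa x s') * sgn (outf σb y t') * R x y (inp σa s') ((fun _ => inp σb 1) t') := by
          refine Finset.sum_congr rfl fun s' _ => Finset.sum_congr rfl fun t' _ => ?_
          rcases fin2_eq t' with ht' | ht' <;> subst ht'
          · congr 1
            simp only [hcy]
            exact inner_subst_B R hR _ (fun x => sgn (outf σa x s')) _ _ _
          · rfl
        rw [crux]
        exact key_bob R hR σ hσ (fun s' x => sgn (outf σa x s')) (fun t' y => sgn (outf σb y t'))
          hw he (fun s' => inp σa s') (fun _ => inp σb 1) rfl
      · have crux : (∑ s', ∑ t', (σ s' t' * ∑ x, ∑ y,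
              sgn (outf σa x s') * sgn (outf σb y t') * R x y (inp σa s') (inp σb t')))
            = ∑ s', ∑ t', σ s' t' * ∑ x, ∑ y,
              sgn (outf σa x s') * sgn (outf σb y t') * R x y (inp σa s') ((fun _ => inp σb 0) t') := by
          refine Finset.sum_congr rfl fun s' _ => Finset.sum_congr rfl fun t' _ => ?_
          rcases fin2_eq t' with ht' | ht' <;> subst ht'
          · rfl
          · congr 1
            simp only [hcy]
            exact inner_subst_B R hR _ (fun x => sgn (outf σa x s')) _ _ _
        rw [crux]
        exact key_bob R hR σ hσ (fun s' x => sgn (outf σa x s')) (fun t' y => sgn (outf σb y t'))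
          hw he (fun s' => inp σa s') (fun _ => inp σb 0) rfl

-- chunk 4: decomposition of LOSR operations
def Pf (q : Fin 2 → Fin 2 → Fin 2 → Fin 2 → ℝ) (s s' : Fin 2) : ℝ := ∑ x', q x' s 0 s'

def Qf (q : Fin 2 → Fin 2 → Fin 2 → Fin 2 → ℝ) (x' x s s' : Fin 2) : ℝ :=
  if Pf q s s' = 0 then 1/2 else q x' s x s' / Pf q s s'

def Ff (q : Fin 2 → Fin 2 → Fin 2 → Fin 2 → ℝ) (s'' : Fin 2) (c : Fin 2 × Fin 2 × Fin 2) : ℝ :=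
  Pf q c.1 s'' * Qf q c.2.1 0 c.1 s'' * Qf q c.2.2 1 c.1 s''

def wf (q : Fin 2 → Fin 2 → Fin 2 → Fin 2 → ℝ) (σa : Strat) : ℝ := ∏ s'', Ff q s'' (σa s'')

section decompSide

variable (q : Fin 2 → Fin 2 → Fin 2 → Fin 2 → ℝ)

def Hq0 (q : Fin 2 → Fin 2 → Fin 2 → Fin 2 → ℝ) : Prop := ∀ x' s x s', 0 ≤ q x' s x s'
def Hq1 (q : Fin 2 → Fin 2 → Fin 2 → Fin 2 → ℝ) : Prop := ∀ x s', ∑ x', ∑ s, q x' s x s' = 1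
def HqNS (q : Fin 2 → Fin 2 → Fin 2 → Fin 2 → ℝ) : Prop :=
  ∀ x₁ x₂ s s', ∑ x', q x' s x₁ s' = ∑ x', q x' s x₂ s'

lemma Pf_nonneg (hq0 : Hq0 q) (s s' : Fin 2) : 0 ≤ Pf q s s' :=
  Finset.sum_nonneg fun x' _ => hq0 x' s 0 s'

lemma Pf_sum (hq1 : Hq1 q) (s' : Fin 2) : ∑ s, Pf q s s' = 1 := by
  unfold Pf; rw [Finset.sum_comm]; exact hq1 0 s'

lemma Qf_nonneg (hq0 : Hq0 q) (x' x s s' : Fin 2) : 0 ≤ Qf q x' x s s' := by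
  unfold Qf
  split
  · norm_num
  · exact div_nonneg (hq0 _ _ _ _) (Pf_nonneg q hq0 s s')

lemma Qf_sum (hqNS : HqNS q) (x s s' : Fin 2) : Qf q 0 x s s' + Qf q 1 x s s' = 1 := by
  unfold Qf
  by_cases h : Pf q s s' = 0
  · simp [h]; norm_num
  · simp only [h, if_false]
    rw [← add_div]
    have : q 0 s x s' + q 1 s x s' = Pf q s s' := by
      have := hqNS x 0 s s'
      simp only [Fin.sum_univ_two] at this
      unfold Pf
      simp only [Fin.sum_univ_two]
      linarith
    rw [this, div_self h]

lemma PQf (hq0 : Hq0 q) (hqNS : HqNS q) (x' x s s' : Fin 2) : Pf q s s' * Qf q x' x s s' = q x' s x s' := by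
  unfold Qf
  by_cases h : Pf q s s' = 0
  · rw [if_pos h, h]
    have hle : q x' s x s' ≤ Pf q s s' := by
      have := hqNS x 0 s s'
      unfold Pf
      rw [← this]
      exact Finset.single_le_sum (f := fun z => q z s x s') (fun z _ => hq0 z s x s')
        (Finset.mem_univ x')
    have := hq0 x' s x s'
    rw [h] at hle
    linarith
  · rw [if_neg h, mul_comm, div_mul_cancel₀ _ h]

lemma Ff_nonneg (hq0 : Hq0 q) (s'' : Fin 2) (c : Fin 2 × Fin 2 × Fin 2) : 0 ≤ Ff q s'' c :=
  mul_nonneg (mul_nonneg (Pf_nonneg q hq0 _ _) (Qf_nonneg q hq0 _ _ _ _)) (Qf_nonneg q hq0 _ _ _ _)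

lemma Ff_sum (hq0 : Hq0 q) (hq1 : Hq1 q) (hqNS : HqNS q) (s'' : Fin 2) : ∑ c : Fin 2 × Fin 2 × Fin 2, Ff q s'' c = 1 := by
  have expand : ∑ c : Fin 2 × Fin 2 × Fin 2, Ff q s'' c
      = ∑ a, Pf q a s'' * ((Qf q 0 0 a s'' + Qf q 1 0 a s'') * (Qf q 0 1 a s'' + Qf q 1 1 a s'')) := by
    rw [Fintype.sum_prod_type]
    refine Finset.sum_congr rfl fun a _ => ?_
    rw [Fintype.sum_prod_type]
    simp only [Fin.sum_univ_two, Ff]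
    ring
  rw [expand]
  have hone : ∀ a : Fin 2, Pf q a s'' * ((Qf q 0 0 a s'' + Qf q 1 0 a s'') * (Qf q 0 1 a s'' + Qf q 1 1 a s'')) = Pf q a s'' := by
    intro a
    rw [Qf_sum q hqNS 0 a s'', Qf_sum q hqNS 1 a s'']
    ring
  rw [Finset.sum_congr rfl fun a _ => hone a]
  exact Pf_sum q hq1 s''

lemma wf_nonneg (hq0 : Hq0 q) (σa : Strat) : 0 ≤ wf q σa :=
  Finset.prod_nonneg fun s'' _ => Ff_nonneg q hq0 s'' (σa s'')

lemma wf_sum (hq0 : Hq0 q) (hq1 : Hq1 q) (hqNS : HqNS q) : ∑ σa : Strat, wf q σa = 1 := by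
  unfold wf
  rw [← Fintype.prod_sum]
  rw [Finset.prod_congr rfl fun s'' _ => Ff_sum q hq0 hq1 hqNS s'']
  exact Finset.prod_const_one

lemma slotA (hq0 : Hq0 q) (hqNS : HqNS q) (s' s x x' : Fin 2) :
    ∑ c : Fin 2 × Fin 2 × Fin 2, Ff q s' c * (if c.1 = s then (1:ℝ) else 0) *
      (if (if x = 0 then c.2.1 else c.2.2) = x' then (1:ℝ) else 0) = q x' s x s' := by
  have hq := Qf_sum q hqNS
  have hpq := PQf q hq0 hqNS
  rcases fin2_eq x with h | h <;> subst h <;> rcases fin2_eq s with h | h <;> subst h <;>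
    rcases fin2_eq x' with h | h <;> subst h <;>
    simp only [Fintype.sum_prod_type, Fin.sum_univ_two, Ff] <;> simp
  · linear_combination Pf q 0 s' * Qf q 0 0 0 s' * hq 1 0 s' + hpq 0 0 0 s'
  · linear_combination Pf q 0 s' * Qf q 1 0 0 s' * hq 1 0 s' + hpq 1 0 0 s'
  · linear_combination Pf q 1 s' * Qf q 0 0 1 s' * hq 1 1 s' + hpq 0 0 1 s'
  · linear_combination Pf q 1 s' * Qf q 1 0 1 s' * hq 1 1 s' + hpq 1 0 1 s'
  · linear_combination Pf q 0 s' * Qf q 0 1 0 s' * hq 0 0 s' + hpq 0 1 0 s'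
  · linear_combination Pf q 0 s' * Qf q 1 1 0 s' * hq 0 0 s' + hpq 1 1 0 s'
  · linear_combination Pf q 1 s' * Qf q 0 1 1 s' * hq 0 1 s' + hpq 0 1 1 s'
  · linear_combination Pf q 1 s' * Qf q 1 1 1 s' * hq 0 1 s' + hpq 1 1 1 s'

def Hslot (q : Fin 2 → Fin 2 → Fin 2 → Fin 2 → ℝ) (s' s x x' : Fin 2)
    (s'' : Fin 2) (c : Fin 2 × Fin 2 × Fin 2) : ℝ :=
  if s'' = s' then Ff q s'' c * (if c.1 = s then (1:ℝ) else 0) *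
    (if (if x = 0 then c.2.1 else c.2.2) = x' then (1:ℝ) else 0) else Ff q s'' c

lemma keyA (hq0 : Hq0 q) (hq1 : Hq1 q) (hqNS : HqNS q) (s' s x x' : Fin 2) :
    ∑ σa : Strat, wf q σa * (if inp σa s' = s then (1:ℝ) else 0) *
      (if outf σa x s' = x' then (1:ℝ) else 0) = q x' s x s' := by
  have hsummand : ∀ σa : Strat,
      wf q σa * (if inp σa s' = s then (1:ℝ) else 0) * (if outf σa x s' = x' then (1:ℝ) else 0)
      = ∏ s'', Hslot q s' s x x' s'' (σa s'') := by
    intro σa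
    rcases fin2_eq s' with h | h <;> subst h <;>
      simp only [wf, Hslot, Fin.prod_univ_two, inp, outf] <;> norm_num <;> split_ifs <;> simp_all <;> exact (mul_ite _ _ _ _).trans (by rw [mul_one, mul_zero]; exact rfl)
  rw [Finset.sum_congr rfl fun σa _ => hsummand σa]
  rw [← Fintype.prod_sum (f := Hslot q s' s x x')]
  rcases fin2_eq s' with h | h <;> subst h
  · rw [Fin.prod_univ_two]
    have e0 : ∑ j : Fin 2 × Fin 2 × Fin 2, Hslot q 0 s x x' 0 j
        = ∑ c : Fin 2 × Fin 2 × Fin 2, Ff q 0 c * (if c.1 = s then (1:ℝ) else 0) *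
          (if (if x = 0 then c.2.1 else c.2.2) = x' then (1:ℝ) else 0) :=
      Finset.sum_congr rfl fun c _ => by simp [Hslot]
    have e1 : ∑ j : Fin 2 × Fin 2 × Fin 2, Hslot q 0 s x x' 1 j
        = ∑ c : Fin 2 × Fin 2 × Fin 2, Ff q 1 c :=
      Finset.sum_congr rfl fun c _ => by simp [Hslot]
    rw [e0, e1, Ff_sum q hq0 hq1 hqNS 1, mul_one]
    exact slotA q hq0 hqNS 0 s x x'
  · rw [Fin.prod_univ_two]
    have e0 : ∑ j : Fin 2 × Fin 2 × Fin 2, Hslot q 1 s x x' 0 j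
        = ∑ c : Fin 2 × Fin 2 × Fin 2, Ff q 0 c :=
      Finset.sum_congr rfl fun c _ => by simp [Hslot]
    have e1 : ∑ j : Fin 2 × Fin 2 × Fin 2, Hslot q 1 s x x' 1 j
        = ∑ c : Fin 2 × Fin 2 × Fin 2, Ff q 1 c * (if c.1 = s then (1:ℝ) else 0) *
          (if (if x = 0 then c.2.1 else c.2.2) = x' then (1:ℝ) else 0) :=
      Finset.sum_congr rfl fun c _ => by simp [Hslot]
    rw [e0, e1, Ff_sum q hq0 hq1 hqNS 0, one_mul]
    exact slotA q hq0 hqNS 1 s x x'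

end decompSide

-- chunk 5: the decomposition theorem
lemma swap4 {A B C D : Type*} [Fintype A] [Fintype B] [Fintype C] [Fintype D]
    (f : A → B → C → D → ℝ) :
    ∑ a, ∑ b, ∑ c, ∑ d, f a b c d = ∑ c, ∑ d, ∑ a, ∑ b, f a b c d := by
  calc ∑ a, ∑ b, ∑ c, ∑ d, f a b c d
      = ∑ a, ∑ c, ∑ b, ∑ d, f a b c d :=
        Finset.sum_congr rfl fun a _ => Finset.sum_comm
    _ = ∑ c, ∑ a, ∑ b, ∑ d, f a b c d := Finset.sum_comm
    _ = ∑ c, ∑ a, ∑ d, ∑ b, f a b c d :=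
        Finset.sum_congr rfl fun c _ => Finset.sum_congr rfl fun a _ => Finset.sum_comm
    _ = ∑ c, ∑ d, ∑ a, ∑ b, f a b c d :=
        Finset.sum_congr rfl fun c _ => Finset.sum_comm

lemma swap5 {A B C D E : Type*} [Fintype A] [Fintype B] [Fintype C] [Fintype D] [Fintype E]
    (f : A → B → C → D → E → ℝ) :
    ∑ a, ∑ b, ∑ c, ∑ d, ∑ e, f a b c d e = ∑ e, ∑ a, ∑ b, ∑ c, ∑ d, f a b c d e := by
  calc ∑ a, ∑ b, ∑ c, ∑ d, ∑ e, f a b c d e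
      = ∑ a, ∑ b, ∑ c, ∑ e, ∑ d, f a b c d e :=
        Finset.sum_congr rfl fun a _ => Finset.sum_congr rfl fun b _ =>
          Finset.sum_congr rfl fun c _ => Finset.sum_comm
    _ = ∑ a, ∑ b, ∑ e, ∑ c, ∑ d, f a b c d e :=
        Finset.sum_congr rfl fun a _ => Finset.sum_congr rfl fun b _ => Finset.sum_comm
    _ = ∑ a, ∑ e, ∑ b, ∑ c, ∑ d, f a b c d e :=
        Finset.sum_congr rfl fun a _ => Finset.sum_comm
    _ = ∑ e, ∑ a, ∑ b, ∑ c, ∑ d, f a b c d e := Finset.sum_comm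

lemma hexp (R : Box) (x y S T : Fin 2) :
    R x y S T = ∑ s, ∑ t, (if S = s then (1:ℝ) else 0) * (if T = t then (1:ℝ) else 0) * R x y s t := by
  rcases fin2_eq S with h | h <;> subst h <;> rcases fin2_eq T with h | h <;> subst h <;>
    simp [Fin.sum_univ_two]

lemma inner_decomp (pA' pB' : Fin 2 → Fin 2 → Fin 2 → Fin 2 → ℝ)
    (hA0 : Hq0 pA') (hA1 : Hq1 pA') (hANS : HqNS pA')
    (hB0 : Hq0 pB') (hB1 : Hq1 pB') (hBNS : HqNS pB')
    (R : Box) (x' y' s' t' x y : Fin 2) :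
    ∑ σa : Strat, ∑ σb : Strat, wf pA' σa * wf pB' σb *
      ((if outf σa x s' = x' then (1:ℝ) else 0) * (if outf σb y t' = y' then (1:ℝ) else 0) *
        R x y (inp σa s') (inp σb t'))
    = ∑ s, ∑ t, pA' x' s x s' * pB' y' t y t' * R x y s t := by
  calc ∑ σa : Strat, ∑ σb : Strat, wf pA' σa * wf pB' σb *
      ((if outf σa x s' = x' then (1:ℝ) else 0) * (if outf σb y t' = y' then (1:ℝ) else 0) *
        R x y (inp σa s') (inp σb t'))
      = ∑ σa : Strat, ∑ σb : Strat, ∑ s, ∑ t,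
          (wf pA' σa * (if inp σa s' = s then (1:ℝ) else 0) * (if outf σa x s' = x' then (1:ℝ) else 0)) *
          ((wf pB' σb * (if inp σb t' = t then (1:ℝ) else 0) * (if outf σb y t' = y' then (1:ℝ) else 0)) *
            R x y s t) := by
        refine Finset.sum_congr rfl fun σa _ => Finset.sum_congr rfl fun σb _ => ?_
        rw [hexp R x y (inp σa s') (inp σb t')]
        simp only [Finset.mul_sum]
        exact Finset.sum_congr rfl fun s _ => Finset.sum_congr rfl fun t _ => by ring
    _ = ∑ s, ∑ t, ∑ σa : Strat, ∑ σb : Strat,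
          (wf pA' σa * (if inp σa s' = s then (1:ℝ) else 0) * (if outf σa x s' = x' then (1:ℝ) else 0)) *
          ((wf pB' σb * (if inp σb t' = t then (1:ℝ) else 0) * (if outf σb y t' = y' then (1:ℝ) else 0)) *
            R x y s t) := swap4 _
    _ = ∑ s, ∑ t,
          (∑ σa : Strat, wf pA' σa * (if inp σa s' = s then (1:ℝ) else 0) * (if outf σa x s' = x' then (1:ℝ) else 0)) *
          ((∑ σb : Strat, wf pB' σb * (if inp σb t' = t then (1:ℝ) else 0) * (if outf σb y t' = y' then (1:ℝ) else 0)) *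
            R x y s t) := by
        refine Finset.sum_congr rfl fun s _ => Finset.sum_congr rfl fun t _ => ?_
        calc ∑ σa : Strat, ∑ σb : Strat, _ * (_ * R x y s t)
            = ∑ σa : Strat,
              (wf pA' σa * (if inp σa s' = s then (1:ℝ) else 0) * (if outf σa x s' = x' then (1:ℝ) else 0)) *
              ((∑ σb : Strat, wf pB' σb * (if inp σb t' = t then (1:ℝ) else 0) * (if outf σb y t' = y' then (1:ℝ) else 0)) *
                R x y s t) := by
              refine Finset.sum_congr rfl fun σa _ => ?_
              rw [← Finset.mul_sum, ← Finset.sum_mul]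
          _ = _ := by rw [← Finset.sum_mul]
    _ = ∑ s, ∑ t, pA' x' s x s' * (pB' y' t y t' * R x y s t) := by
        refine Finset.sum_congr rfl fun s _ => Finset.sum_congr rfl fun t _ => ?_
        rw [keyA pA' hA0 hA1 hANS s' s x x', keyA pB' hB0 hB1 hBNS t' t y y']
    _ = ∑ s, ∑ t, pA' x' s x s' * pB' y' t y t' * R x y s t :=
        Finset.sum_congr rfl fun s _ => Finset.sum_congr rfl fun t _ => by ring

lemma decomp (τ : Op) (hτ : IsLOSR τ) :
    ∃ (n : ℕ) (w : Fin n → Strat → Strat → ℝ),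
      (∀ i σa σb, 0 ≤ w i σa σb) ∧ (∑ i, ∑ σa, ∑ σb, w i σa σb = 1) ∧
      ∀ (R : Box) (x' y' s' t' : Fin 2),
        applyOp τ R x' y' s' t' = ∑ i, ∑ σa, ∑ σb, w i σa σb * dApp σa σb R x' y' s' t' := by
  obtain ⟨n, p, pA, pB, hp0, hp1, hA0, hA1, hB0, hB1, hANS, hBNS, hτf⟩ := hτ
  have hA0' : ∀ i, Hq0 (pA i) := fun i x' s x s' => hA0 i x' s x s'
  have hA1' : ∀ i, Hq1 (pA i) := fun i x s' => hA1 i x s'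
  have hANS' : ∀ i, HqNS (pA i) := fun i a b s s' => hANS i a b s s'
  have hB0' : ∀ i, Hq0 (pB i) := fun i x' s x s' => hB0 i x' s x s'
  have hB1' : ∀ i, Hq1 (pB i) := fun i x s' => hB1 i x s'
  have hBNS' : ∀ i, HqNS (pB i) := fun i a b s s' => hBNS i a b s s'
  refine ⟨n, fun i σa σb => p i * wf (pA i) σa * wf (pB i) σb, ?_, ?_, ?_⟩
  · intro i σa σb
    exact mul_nonneg (mul_nonneg (hp0 i) (wf_nonneg _ (hA0' i) σa)) (wf_nonneg _ (hB0' i) σb)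
  · calc ∑ i, ∑ σa : Strat, ∑ σb : Strat, p i * wf (pA i) σa * wf (pB i) σb
        = ∑ i, p i := by
          refine Finset.sum_congr rfl fun i _ => ?_
          calc ∑ σa : Strat, ∑ σb : Strat, p i * wf (pA i) σa * wf (pB i) σb
              = ∑ σa : Strat, (p i * wf (pA i) σa) * ∑ σb : Strat, wf (pB i) σb :=
                Finset.sum_congr rfl fun σa _ => by rw [Finset.mul_sum]
            _ = ∑ σa : Strat, p i * wf (pA i) σa := by
                rw [wf_sum (pB i) (hB0' i) (hB1' i) (hBNS' i)]
                exact Finset.sum_congr rfl fun σa _ => by ring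
            _ = p i * ∑ σa : Strat, wf (pA i) σa := by rw [Finset.mul_sum]
            _ = p i := by rw [wf_sum (pA i) (hA0' i) (hA1' i) (hANS' i), mul_one]
      _ = 1 := hp1
  · intro R x' y' s' t'
    unfold applyOp
    calc ∑ x, ∑ y, ∑ s, ∑ t, τ x' y' s t x y s' t' * R x y s t
        = ∑ x, ∑ y, ∑ s, ∑ t, ∑ i, p i * pA i x' s x s' * pB i y' t y t' * R x y s t := by
          refine Finset.sum_congr rfl fun x _ => Finset.sum_congr rfl fun y _ =>
            Finset.sum_congr rfl fun s _ => Finset.sum_congr rfl fun t _ => ?_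
          rw [hτf x' y' s t x y s' t', Finset.sum_mul]
      _ = ∑ i, ∑ x, ∑ y, ∑ s, ∑ t, p i * pA i x' s x s' * pB i y' t y t' * R x y s t :=
          swap5 _
      _ = ∑ i, ∑ x, ∑ y, p i * ∑ s, ∑ t, pA i x' s x s' * pB i y' t y t' * R x y s t := by
          refine Finset.sum_congr rfl fun i _ => Finset.sum_congr rfl fun x _ =>
            Finset.sum_congr rfl fun y _ => ?_
          rw [Finset.mul_sum]
          refine Finset.sum_congr rfl fun s _ => ?_
          rw [Finset.mul_sum]
          exact Finset.sum_congr rfl fun t _ => by ring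
      _ = ∑ i, ∑ x, ∑ y, p i * ∑ σa : Strat, ∑ σb : Strat, wf (pA i) σa * wf (pB i) σb *
            ((if outf σa x s' = x' then (1:ℝ) else 0) * (if outf σb y t' = y' then (1:ℝ) else 0) *
              R x y (inp σa s') (inp σb t')) := by
          refine Finset.sum_congr rfl fun i _ => Finset.sum_congr rfl fun x _ =>
            Finset.sum_congr rfl fun y _ => ?_
          rw [inner_decomp (pA i) (pB i) (hA0' i) (hA1' i) (hANS' i) (hB0' i) (hB1' i) (hBNS' i)
            R x' y' s' t' x y]
      _ = ∑ i, ∑ x, ∑ y, ∑ σa : Strat, ∑ σb : Strat, p i * (wf (pA i) σa * wf (pB i) σb *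
            ((if outf σa x s' = x' then (1:ℝ) else 0) * (if outf σb y t' = y' then (1:ℝ) else 0) *
              R x y (inp σa s') (inp σb t'))) := by
          refine Finset.sum_congr rfl fun i _ => Finset.sum_congr rfl fun x _ =>
            Finset.sum_congr rfl fun y _ => ?_
          rw [Finset.mul_sum]
          refine Finset.sum_congr rfl fun σa _ => ?_
          rw [Finset.mul_sum]
      _ = ∑ i, ∑ σa : Strat, ∑ σb : Strat, ∑ x, ∑ y, p i * (wf (pA i) σa * wf (pB i) σb *
            ((if outf σa x s' = x' then (1:ℝ) else 0) * (if outf σb y t' = y' then (1:ℝ) else 0) *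
              R x y (inp σa s') (inp σb t'))) :=
          Finset.sum_congr rfl fun i _ => swap4 _
      _ = ∑ i, ∑ σa : Strat, ∑ σb : Strat, p i * wf (pA i) σa * wf (pB i) σb *
            dApp σa σb R x' y' s' t' := by
          refine Finset.sum_congr rfl fun i _ => Finset.sum_congr rfl fun σa _ =>
            Finset.sum_congr rfl fun σb _ => ?_
          unfold dApp
          conv_rhs => rw [Finset.mul_sum]
          refine Finset.sum_congr rfl fun x _ => ?_
          conv_rhs => rw [Finset.mul_sum]
          exact Finset.sum_congr rfl fun y _ => by ring

-- chunk 6: per-strategy bound and main monotone bound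
lemma pm_mul_le (e v m : ℝ) (he : e = 1 ∨ e = -1) (hv : |v| ≤ m) : e * v ≤ m := by
  rcases he with h | h <;> subst h
  · have := le_abs_self v; linarith
  · have := neg_abs_le v; linarith

lemma margA_dApp_bound (σa σb : Strat) (R : Box) (hR : IsBox R) (s' : Fin 2) :
    |margA (dApp σa σb R) s'| ≤ 1 := by
  rw [margA_dApp]
  have h1 : ∀ x y : Fin 2, |sgn (outf σa x s') * R x y (inp σa s') (inp σb 0)|
      = R x y (inp σa s') (inp σb 0) := by
    intro x y; rw [abs_mul, abs_sgn, one_mul, abs_of_nonneg (hR.1 _ _ _ _)]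
  calc |∑ x, ∑ y, sgn (outf σa x s') * R x y (inp σa s') (inp σb 0)|
      ≤ ∑ x, |∑ y, sgn (outf σa x s') * R x y (inp σa s') (inp σb 0)| :=
        Finset.abs_sum_le_sum_abs _ _
    _ ≤ ∑ x, ∑ y, |sgn (outf σa x s') * R x y (inp σa s') (inp σb 0)| :=
        Finset.sum_le_sum fun x _ => Finset.abs_sum_le_sum_abs _ _
    _ = ∑ x, ∑ y, R x y (inp σa s') (inp σb 0) := by simp only [h1]
    _ = 1 := hR.2.1 _ _

lemma margB_dApp_bound (σa σb : Strat) (R : Box) (hR : IsBox R) (t' : Fin 2) :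
    |margB (dApp σa σb R) t'| ≤ 1 := by
  rw [margB_dApp]
  have h1 : ∀ x y : Fin 2, |sgn (outf σb y t') * R x y (inp σa 0) (inp σb t')|
      = R x y (inp σa 0) (inp σb t') := by
    intro x y; rw [abs_mul, abs_sgn, one_mul, abs_of_nonneg (hR.1 _ _ _ _)]
  calc |∑ x, ∑ y, sgn (outf σb y t') * R x y (inp σa 0) (inp σb t')|
      ≤ ∑ x, |∑ y, sgn (outf σb y t') * R x y (inp σa 0) (inp σb t')| :=
        Finset.abs_sum_le_sum_abs _ _
    _ ≤ ∑ x, ∑ y, |sgn (outf σb y t') * R x y (inp σa 0) (inp σb t')| :=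
        Finset.sum_le_sum fun x _ => Finset.abs_sum_le_sum_abs _ _
    _ = ∑ x, ∑ y, R x y (inp σa 0) (inp σb t') := by simp only [h1]
    _ = 1 := hR.2.1 _ _

lemma strat_bound (R : Box) (hR : IsBox R) (κ c m : ℝ) (hκ : 0 ≤ κ)
    (hCH : ∀ σ, IsSignPattern σ → CHSHk σ R ≤ c)
    (hmA : ∀ s, |margA R s| ≤ m) (hmB : ∀ t, |margB R t| ≤ m)
    (σa σb : Strat) :
    Phi κ (dApp σa σb R) ≤ max (2 + 4*κ) (c + 4*κ*m) := by
  by_cases hgood : (inp σa 0 ≠ inp σa 1 ∧ ∀ s', outf σa 0 s' ≠ outf σa 1 s') ∧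
      (inp σb 0 ≠ inp σb 1 ∧ ∀ t', outf σb 0 t' ≠ outf σb 1 t')
  · obtain ⟨⟨ha1, ha2⟩, hb1, hb2⟩ := hgood
    obtain ⟨σ', εA, εB, hσ', hεA, hεB, hCHeq, hmAeq, hmBeq⟩ :=
      good_case R hR sstar sstar_pattern σa σb ha1 ha2 hb1 hb2
    have hrw : Phi κ (dApp σa σb R) = CHSHk σ' R +
        κ * ((εA 0 * margA R 0 + εA 1 * margA R 1) + (εB 0 * margB R 0 + εB 1 * margB R 1)) := by
      unfold Phi
      rw [hCHeq]
      have e : margA (dApp σa σb R) 0 + margA (dApp σa σb R) 1 + margB (dApp σa σb R) 0 +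
          margB (dApp σa σb R) 1 = (margA (dApp σa σb R) 0 + margA (dApp σa σb R) 1) +
          (margB (dApp σa σb R) 0 + margB (dApp σa σb R) 1) := by ring
      rw [e, hmAeq, hmBeq]
    rw [hrw]
    have h1 : εA 0 * margA R 0 ≤ m := pm_mul_le _ _ _ (hεA 0) (hmA 0)
    have h2 : εA 1 * margA R 1 ≤ m := pm_mul_le _ _ _ (hεA 1) (hmA 1)
    have h3 : εB 0 * margB R 0 ≤ m := pm_mul_le _ _ _ (hεB 0) (hmB 0)
    have h4 : εB 1 * margB R 1 ≤ m := pm_mul_le _ _ _ (hεB 1) (hmB 1)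
    have hsum : (εA 0 * margA R 0 + εA 1 * margA R 1) + (εB 0 * margB R 0 + εB 1 * margB R 1)
        ≤ 4 * m := by linarith
    have := mul_le_mul_of_nonneg_left hsum hκ
    have hC := hCH σ' hσ'
    have hmax := le_max_right (2 + 4*κ) (c + 4*κ*m)
    nlinarith [hmax]
  · have hch : CHSHk sstar (dApp σa σb R) ≤ 2 := by
      rcases not_and_or.mp hgood with h | h
      · apply deg_alice R hR sstar sstar_pattern σa σb
        rcases not_and_or.mp h with h | h
        · exact Or.inl (not_ne_iff.mp h)
        · push_neg at h
          exact Or.inr h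
      · apply deg_bob R hR sstar sstar_pattern σa σb
        rcases not_and_or.mp h with h | h
        · exact Or.inl (not_ne_iff.mp h)
        · push_neg at h
          exact Or.inr h
    have m1 := (abs_le.mp (margA_dApp_bound σa σb R hR 0)).2
    have m2 := (abs_le.mp (margA_dApp_bound σa σb R hR 1)).2
    have m3 := (abs_le.mp (margB_dApp_bound σa σb R hR 0)).2
    have m4 := (abs_le.mp (margB_dApp_bound σa σb R hR 1)).2
    have hmax := le_max_left (2 + 4*κ) (c + 4*κ*m)
    unfold Phi
    nlinarith [hmax]

lemma swap23 {A B C D E : Type*} [Fintype A] [Fintype B] [Fintype C] [Fintype D] [Fintype E]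
    (f : A → B → C → D → E → ℝ) :
    ∑ a, ∑ b, ∑ c, ∑ d, ∑ e, f a b c d e = ∑ c, ∑ d, ∑ e, ∑ a, ∑ b, f a b c d e := by
  calc ∑ a, ∑ b, ∑ c, ∑ d, ∑ e, f a b c d e
      = ∑ e, ∑ a, ∑ b, ∑ c, ∑ d, f a b c d e := swap5 _
    _ = ∑ d, ∑ e, ∑ a, ∑ b, ∑ c, f a b c d e := swap5 _
    _ = ∑ c, ∑ d, ∑ e, ∑ a, ∑ b, f a b c d e := swap5 _

lemma sum3_add {n : ℕ} (f g : Fin n → Strat → Strat → ℝ) :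
    ∑ i, ∑ σa, ∑ σb, (f i σa σb + g i σa σb)
      = (∑ i, ∑ σa, ∑ σb, f i σa σb) + ∑ i, ∑ σa, ∑ σb, g i σa σb := by
  simp [Finset.sum_add_distrib]

lemma main_bound (R : Box) (hR : IsBox R) (κ c m : ℝ) (hκ : 0 ≤ κ)
    (hCH : ∀ σ, IsSignPattern σ → CHSHk σ R ≤ c)
    (hmA : ∀ s, |margA R s| ≤ m) (hmB : ∀ t, |margB R t| ≤ m)
    (τ : Op) (hτ : IsLOSR τ) :
    Phi κ (applyOp τ R) ≤ max (2 + 4*κ) (c + 4*κ*m) := by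
  obtain ⟨n, w, hw0, hw1, hwf⟩ := decomp τ hτ
  have hpt : ∀ x' y' s' t', applyOp τ R x' y' s' t'
      = ∑ i, ∑ σa, ∑ σb, w i σa σb * dApp σa σb R x' y' s' t' := hwf R
  have hcorr : ∀ s t, corr (applyOp τ R) s t
      = ∑ i, ∑ σa, ∑ σb, w i σa σb * corr (dApp σa σb R) s t := by
    intro s t
    unfold corr
    calc ∑ x, ∑ y, sgn x * sgn y * applyOp τ R x y s t
        = ∑ x, ∑ y, ∑ i, ∑ σa, ∑ σb,
            sgn x * sgn y * (w i σa σb * dApp σa σb R x y s t) := by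
          refine Finset.sum_congr rfl fun x _ => Finset.sum_congr rfl fun y _ => ?_
          rw [hpt x y s t]
          simp only [Finset.mul_sum]
      _ = ∑ i, ∑ σa, ∑ σb, ∑ x, ∑ y,
            sgn x * sgn y * (w i σa σb * dApp σa σb R x y s t) := swap23 _
      _ = ∑ i, ∑ σa, ∑ σb, w i σa σb * ∑ x, ∑ y, sgn x * sgn y * dApp σa σb R x y s t := by
          refine Finset.sum_congr rfl fun i _ => Finset.sum_congr rfl fun σa _ =>
            Finset.sum_congr rfl fun σb _ => ?_
          rw [Finset.mul_sum]
          refine Finset.sum_congr rfl fun x _ => ?_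
          rw [Finset.mul_sum]
          exact Finset.sum_congr rfl fun y _ => by ring
  have hCHSH : CHSHk sstar (applyOp τ R)
      = ∑ i, ∑ σa, ∑ σb, w i σa σb * CHSHk sstar (dApp σa σb R) := by
    unfold CHSHk
    calc ∑ s, ∑ t, sstar s t * corr (applyOp τ R) s t
        = ∑ s, ∑ t, ∑ i, ∑ σa, ∑ σb,
            sstar s t * (w i σa σb * corr (dApp σa σb R) s t) := by
          refine Finset.sum_congr rfl fun s _ => Finset.sum_congr rfl fun t _ => ?_
          rw [hcorr s t]
          simp only [Finset.mul_sum]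
      _ = ∑ i, ∑ σa, ∑ σb, ∑ s, ∑ t,
            sstar s t * (w i σa σb * corr (dApp σa σb R) s t) := swap23 _
      _ = ∑ i, ∑ σa, ∑ σb, w i σa σb * ∑ s, ∑ t, sstar s t * corr (dApp σa σb R) s t := by
          refine Finset.sum_congr rfl fun i _ => Finset.sum_congr rfl fun σa _ =>
            Finset.sum_congr rfl fun σb _ => ?_
          rw [Finset.mul_sum]
          refine Finset.sum_congr rfl fun s _ => ?_
          rw [Finset.mul_sum]
          exact Finset.sum_congr rfl fun t _ => by ring
  have hmarg : ∀ s : Fin 2, margA (applyOp τ R) s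
      = ∑ i, ∑ σa, ∑ σb, w i σa σb * margA (dApp σa σb R) s := by
    intro s
    unfold margA
    calc ∑ x, ∑ y, sgn x * applyOp τ R x y s 0
        = ∑ x, ∑ y, ∑ i, ∑ σa, ∑ σb, sgn x * (w i σa σb * dApp σa σb R x y s 0) := by
          refine Finset.sum_congr rfl fun x _ => Finset.sum_congr rfl fun y _ => ?_
          rw [hpt x y s 0]
          simp only [Finset.mul_sum]
      _ = ∑ i, ∑ σa, ∑ σb, ∑ x, ∑ y, sgn x * (w i σa σb * dApp σa σb R x y s 0) := swap23 _
      _ = ∑ i, ∑ σa, ∑ σb, w i σa σb * ∑ x, ∑ y, sgn x * dApp σa σb R x y s 0 := by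
          refine Finset.sum_congr rfl fun i _ => Finset.sum_congr rfl fun σa _ =>
            Finset.sum_congr rfl fun σb _ => ?_
          rw [Finset.mul_sum]
          refine Finset.sum_congr rfl fun x _ => ?_
          rw [Finset.mul_sum]
          exact Finset.sum_congr rfl fun y _ => by ring
  have hmargB : ∀ t : Fin 2, margB (applyOp τ R) t
      = ∑ i, ∑ σa, ∑ σb, w i σa σb * margB (dApp σa σb R) t := by
    intro t
    unfold margB
    calc ∑ x, ∑ y, sgn y * applyOp τ R x y 0 t
        = ∑ x, ∑ y, ∑ i, ∑ σa, ∑ σb, sgn y * (w i σa σb * dApp σa σb R x y 0 t) := by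
          refine Finset.sum_congr rfl fun x _ => Finset.sum_congr rfl fun y _ => ?_
          rw [hpt x y 0 t]
          simp only [Finset.mul_sum]
      _ = ∑ i, ∑ σa, ∑ σb, ∑ x, ∑ y, sgn y * (w i σa σb * dApp σa σb R x y 0 t) := swap23 _
      _ = ∑ i, ∑ σa, ∑ σb, w i σa σb * ∑ x, ∑ y, sgn y * dApp σa σb R x y 0 t := by
          refine Finset.sum_congr rfl fun i _ => Finset.sum_congr rfl fun σa _ =>
            Finset.sum_congr rfl fun σb _ => ?_
          rw [Finset.mul_sum]
          refine Finset.sum_congr rfl fun x _ => ?_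
          rw [Finset.mul_sum]
          exact Finset.sum_congr rfl fun y _ => by ring
  have hPhi : Phi κ (applyOp τ R) = ∑ i, ∑ σa, ∑ σb, w i σa σb * Phi κ (dApp σa σb R) := by
    have expand : ∀ i σa σb, w i σa σb * Phi κ (dApp σa σb R)
        = w i σa σb * CHSHk sstar (dApp σa σb R) +
          (κ * (w i σa σb * margA (dApp σa σb R) 0) +
           (κ * (w i σa σb * margA (dApp σa σb R) 1) +
            (κ * (w i σa σb * margB (dApp σa σb R) 0) +
             κ * (w i σa σb * margB (dApp σa σb R) 1)))) := by
      intro i σa σb; unfold Phi; ring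
    rw [Finset.sum_congr rfl fun i _ => Finset.sum_congr rfl fun σa _ =>
      Finset.sum_congr rfl fun σb _ => expand i σa σb]
    rw [sum3_add, sum3_add, sum3_add, sum3_add]
    simp only [← Finset.mul_sum]
    unfold Phi
    rw [hCHSH, hmarg 0, hmarg 1, hmargB 0, hmargB 1]
    ring
  rw [hPhi]
  calc ∑ i, ∑ σa, ∑ σb, w i σa σb * Phi κ (dApp σa σb R)
      ≤ ∑ i, ∑ σa, ∑ σb, w i σa σb * max (2 + 4*κ) (c + 4*κ*m) := by
        refine Finset.sum_le_sum fun i _ => ?_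
        refine Finset.sum_le_sum fun σa _ => ?_
        refine Finset.sum_le_sum fun σb _ => ?_
        exact mul_le_mul_of_nonneg_left (strat_bound R hR κ c m hκ hCH hmA hmB σa σb)
          (hw0 i σa σb)
    _ = max (2 + 4*κ) (c + 4*κ*m) := by
        simp only [← Finset.sum_mul]
        rw [hw1, one_mul]

-- chunk 7: concrete boxes
lemma fin2_two : (2 : Fin 2) = 0 := rfl
def PRbox : Box := fun x y s t => if x + y = s * t then 1/2 else 0
def Lstar : Box := fun x y _ _ => if x = 0 ∧ y = 0 then 1 else 0
def LNPR : Box := fun x y _ _ => if x = y then 1/2 else 0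
def B1 : Box := fun x y s t => (1/2) * Lstar x y s t + (1/2) * PRbox x y s t
def B2 : Box := fun x y s t => (3/4) * PRbox x y s t + (1/4) * LNPR x y s t
def B3 : Box := fun x y s t => (3/5) * Lstar x y s t + (2/5) * PRbox x y s t

lemma isBox_B1 : IsBox B1 := by
  refine ⟨?_, ?_, ?_, ?_⟩
  · intro x y s t
    fin_cases x <;> fin_cases y <;> fin_cases s <;> fin_cases t <;>
      simp [B1, Lstar, PRbox, fin2_two] <;> norm_num
  · intro s t
    fin_cases s <;> fin_cases t <;>
      simp [B1, Lstar, PRbox, fin2_two, Fin.sum_univ_two] <;> norm_num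
  · intro x s t t'
    fin_cases x <;> fin_cases s <;> fin_cases t <;> fin_cases t' <;>
      simp [B1, Lstar, PRbox, fin2_two, Fin.sum_univ_two] <;> norm_num
  · intro y t s s'
    fin_cases y <;> fin_cases t <;> fin_cases s <;> fin_cases s' <;>
      simp [B1, Lstar, PRbox, fin2_two, Fin.sum_univ_two] <;> norm_num

lemma isBox_B2 : IsBox B2 := by
  refine ⟨?_, ?_, ?_, ?_⟩
  · intro x y s t
    fin_cases x <;> fin_cases y <;> fin_cases s <;> fin_cases t <;>
      simp [B2, LNPR, PRbox, fin2_two] <;> norm_num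
  · intro s t
    fin_cases s <;> fin_cases t <;>
      simp [B2, LNPR, PRbox, fin2_two, Fin.sum_univ_two] <;> norm_num
  · intro x s t t'
    fin_cases x <;> fin_cases s <;> fin_cases t <;> fin_cases t' <;>
      simp [B2, LNPR, PRbox, fin2_two, Fin.sum_univ_two] <;> norm_num
  · intro y t s s'
    fin_cases y <;> fin_cases t <;> fin_cases s <;> fin_cases s' <;>
      simp [B2, LNPR, PRbox, fin2_two, Fin.sum_univ_two] <;> norm_num

lemma isBox_B3 : IsBox B3 := by
  refine ⟨?_, ?_, ?_, ?_⟩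
  · intro x y s t
    fin_cases x <;> fin_cases y <;> fin_cases s <;> fin_cases t <;>
      simp [B3, Lstar, PRbox, fin2_two] <;> norm_num
  · intro s t
    fin_cases s <;> fin_cases t <;>
      simp [B3, Lstar, PRbox, fin2_two, Fin.sum_univ_two] <;> norm_num
  · intro x s t t'
    fin_cases x <;> fin_cases s <;> fin_cases t <;> fin_cases t' <;>
      simp [B3, Lstar, PRbox, fin2_two, Fin.sum_univ_two] <;> norm_num
  · intro y t s s'
    fin_cases y <;> fin_cases t <;> fin_cases s <;> fin_cases s' <;>
      simp [B3, Lstar, PRbox, fin2_two, Fin.sum_univ_two] <;> norm_num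

lemma corr_B1_00 : corr B1 0 0 = 1 := by
  simp [corr, B1, Lstar, PRbox, fin2_two, sgn, Fin.sum_univ_two] <;> norm_num
lemma corr_B1_01 : corr B1 0 1 = 1 := by
  simp [corr, B1, Lstar, PRbox, fin2_two, sgn, Fin.sum_univ_two] <;> norm_num
lemma corr_B1_10 : corr B1 1 0 = 1 := by
  simp [corr, B1, Lstar, PRbox, fin2_two, sgn, Fin.sum_univ_two] <;> norm_num
lemma corr_B1_11 : corr B1 1 1 = 0 := by
  simp [corr, B1, Lstar, PRbox, fin2_two, sgn, Fin.sum_univ_two] <;> norm_num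

lemma corr_B2_00 : corr B2 0 0 = 1 := by
  simp [corr, B2, LNPR, PRbox, fin2_two, sgn, Fin.sum_univ_two] <;> norm_num
lemma corr_B2_01 : corr B2 0 1 = 1 := by
  simp [corr, B2, LNPR, PRbox, fin2_two, sgn, Fin.sum_univ_two] <;> norm_num
lemma corr_B2_10 : corr B2 1 0 = 1 := by
  simp [corr, B2, LNPR, PRbox, fin2_two, sgn, Fin.sum_univ_two] <;> norm_num
lemma corr_B2_11 : corr B2 1 1 = -(1/2) := by
  simp [corr, B2, LNPR, PRbox, fin2_two, sgn, Fin.sum_univ_two] <;> norm_num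

lemma corr_B3_00 : corr B3 0 0 = 1 := by
  simp [corr, B3, Lstar, PRbox, fin2_two, sgn, Fin.sum_univ_two] <;> norm_num
lemma corr_B3_01 : corr B3 0 1 = 1 := by
  simp [corr, B3, Lstar, PRbox, fin2_two, sgn, Fin.sum_univ_two] <;> norm_num
lemma corr_B3_10 : corr B3 1 0 = 1 := by
  simp [corr, B3, Lstar, PRbox, fin2_two, sgn, Fin.sum_univ_two] <;> norm_num
lemma corr_B3_11 : corr B3 1 1 = 1/5 := by
  simp [corr, B3, Lstar, PRbox, fin2_two, sgn, Fin.sum_univ_two] <;> norm_num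

lemma chsh_B1 (σ : Fin 2 → Fin 2 → ℝ) (hσ : IsSignPattern σ) : CHSHk σ B1 ≤ 3 := by
  obtain ⟨hv, hp⟩ := hσ
  unfold CHSHk
  simp only [Fin.sum_univ_two, corr_B1_00, corr_B1_01, corr_B1_10, corr_B1_11]
  rcases hv 0 0 with h00 | h00 <;> rcases hv 0 1 with h01 | h01 <;>
    rcases hv 1 0 with h10 | h10 <;> rcases hv 1 1 with h11 | h11 <;>
    rw [h00, h01, h10, h11] at hp ⊢ <;> (revert hp; norm_num)

lemma chsh_B2 (σ : Fin 2 → Fin 2 → ℝ) (hσ : IsSignPattern σ) : CHSHk σ B2 ≤ 7/2 := by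
  obtain ⟨hv, hp⟩ := hσ
  unfold CHSHk
  simp only [Fin.sum_univ_two, corr_B2_00, corr_B2_01, corr_B2_10, corr_B2_11]
  rcases hv 0 0 with h00 | h00 <;> rcases hv 0 1 with h01 | h01 <;>
    rcases hv 1 0 with h10 | h10 <;> rcases hv 1 1 with h11 | h11 <;>
    rw [h00, h01, h10, h11] at hp ⊢ <;> (revert hp; norm_num)

lemma chsh_B3 (σ : Fin 2 → Fin 2 → ℝ) (hσ : IsSignPattern σ) : CHSHk σ B3 ≤ 14/5 := by
  obtain ⟨hv, hp⟩ := hσ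
  unfold CHSHk
  simp only [Fin.sum_univ_two, corr_B3_00, corr_B3_01, corr_B3_10, corr_B3_11]
  rcases hv 0 0 with h00 | h00 <;> rcases hv 0 1 with h01 | h01 <;>
    rcases hv 1 0 with h10 | h10 <;> rcases hv 1 1 with h11 | h11 <;>
    rw [h00, h01, h10, h11] at hp ⊢ <;> (revert hp; norm_num)

lemma margA_B1 (s : Fin 2) : margA B1 s = 1/2 := by
  fin_cases s <;> simp [margA, B1, Lstar, PRbox, fin2_two, sgn, Fin.sum_univ_two] <;> norm_num
lemma margB_B1 (t : Fin 2) : margB B1 t = 1/2 := by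
  fin_cases t <;> simp [margB, B1, Lstar, PRbox, fin2_two, sgn, Fin.sum_univ_two] <;> norm_num
lemma margA_B2 (s : Fin 2) : margA B2 s = 0 := by
  fin_cases s <;> simp [margA, B2, LNPR, PRbox, fin2_two, sgn, Fin.sum_univ_two] <;> norm_num
lemma margB_B2 (t : Fin 2) : margB B2 t = 0 := by
  fin_cases t <;> simp [margB, B2, LNPR, PRbox, fin2_two, sgn, Fin.sum_univ_two] <;> norm_num
lemma margA_B3 (s : Fin 2) : margA B3 s = 3/5 := by
  fin_cases s <;> simp [margA, B3, Lstar, PRbox, fin2_two, sgn, Fin.sum_univ_two] <;> norm_num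
lemma margB_B3 (t : Fin 2) : margB B3 t = 3/5 := by
  fin_cases t <;> simp [margB, B3, Lstar, PRbox, fin2_two, sgn, Fin.sum_univ_two] <;> norm_num

lemma sstar_00 : sstar 0 0 = 1 := by norm_num [sstar]
lemma sstar_01 : sstar 0 1 = 1 := by norm_num [sstar]
lemma sstar_10 : sstar 1 0 = 1 := by norm_num [sstar]
lemma sstar_11 : sstar 1 1 = -1 := by norm_num [sstar]

lemma phi13_B1 : Phi (1/3) B1 = 11/3 := by
  unfold Phi CHSHk
  simp only [Fin.sum_univ_two, corr_B1_00, corr_B1_01, corr_B1_10, corr_B1_11,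
    sstar_00, sstar_01, sstar_10, sstar_11, margA_B1, margB_B1]
  norm_num

lemma phi13_B3 : Phi (1/3) B3 = 18/5 := by
  unfold Phi CHSHk
  simp only [Fin.sum_univ_two, corr_B3_00, corr_B3_01, corr_B3_10, corr_B3_11,
    sstar_00, sstar_01, sstar_10, sstar_11, margA_B3, margB_B3]
  norm_num

lemma phi0_B2 : Phi 0 B2 = 7/2 := by
  unfold Phi CHSHk
  simp only [Fin.sum_univ_two, corr_B2_00, corr_B2_01, corr_B2_10, corr_B2_11,
    sstar_00, sstar_01, sstar_10, sstar_11]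
  norm_num

-- chunk 8: conversion from B1 to B3 and the final theorem
def cop : Op := fun x' y' s t x y s' t' =>
  (4/5) * ((if x' = x ∧ s = s' then (1:ℝ) else 0) * (if y' = y ∧ t = t' then (1:ℝ) else 0)) +
  (1/5) * ((if x' = 0 ∧ s = s' then (1:ℝ) else 0) * (if y' = 0 ∧ t = t' then (1:ℝ) else 0))

lemma isLOSR_cop : IsLOSR cop := by
  refine ⟨2, fun i => if i = 0 then 4/5 else 1/5,
    fun i x' s x s' => if i = 0 then (if x' = x ∧ s = s' then 1 else 0)
      else (if x' = 0 ∧ s = s' then 1 else 0),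
    fun i y' t y t' => if i = 0 then (if y' = y ∧ t = t' then 1 else 0)
      else (if y' = 0 ∧ t = t' then 1 else 0),
    ?_, ?_, ?_, ?_, ?_, ?_, ?_, ?_, ?_⟩
  · intro i; fin_cases i <;> norm_num
  · simp [Fin.sum_univ_two]; norm_num
  · intro i x' s x s'
    fin_cases i <;> fin_cases x' <;> fin_cases s <;> fin_cases x <;> fin_cases s' <;>
      simp <;> norm_num
  · intro i x s'
    fin_cases i <;> fin_cases x <;> fin_cases s' <;> simp [Fin.sum_univ_two] <;> decide
  · intro i y' t y t'
    fin_cases i <;> fin_cases y' <;> fin_cases t <;> fin_cases y <;> fin_cases t' <;>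
      simp <;> norm_num
  · intro i y t'
    fin_cases i <;> fin_cases y <;> fin_cases t' <;> simp [Fin.sum_univ_two] <;> decide
  · intro i x₁ x₂ s s'
    fin_cases i <;> fin_cases x₁ <;> fin_cases x₂ <;> fin_cases s <;> fin_cases s' <;>
      simp [Fin.sum_univ_two]
  · intro i y₁ y₂ t t'
    fin_cases i <;> fin_cases y₁ <;> fin_cases y₂ <;> fin_cases t <;> fin_cases t' <;>
      simp [Fin.sum_univ_two]
  · intro x' y' s t x y s' t'
    simp [cop, Fin.sum_univ_two]

lemma cop_B1 : applyOp cop B1 = B3 := by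
  funext x' y' s' t'
  unfold applyOp
  fin_cases x' <;> fin_cases y' <;> fin_cases s' <;> fin_cases t' <;>
    simp [cop, B1, B3, Lstar, PRbox, fin2_two, Fin.sum_univ_two] <;> norm_num

lemma conv_B1_B3 : Conv B1 B3 := ⟨cop, isLOSR_cop, cop_B1⟩

lemma no_conv_B1_B2 : ¬ Conv B1 B2 := by
  rintro ⟨τ, hτ, heq⟩
  have h := main_bound B1 isBox_B1 0 3 1 le_rfl chsh_B1
    (fun s => by rw [margA_B1, abs_of_nonneg] <;> norm_num)
    (fun t => by rw [margB_B1, abs_of_nonneg] <;> norm_num) τ hτ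
  rw [heq] at h
  have h2 : Phi 0 B2 = 7/2 := phi0_B2
  rw [h2] at h
  have : max (2 + 4*(0:ℝ)) (3 + 4*0*1) = 3 := by norm_num
  rw [this] at h
  norm_num at h

lemma no_conv_B2_B1 : ¬ Conv B2 B1 := by
  rintro ⟨τ, hτ, heq⟩
  have h := main_bound B2 isBox_B2 (1/3) (7/2) 0 (by norm_num) chsh_B2
    (fun s => by rw [margA_B2]; norm_num) (fun t => by rw [margB_B2]; norm_num) τ hτ
  rw [heq, phi13_B1] at h
  have : max (2 + 4*((1:ℝ)/3)) (7/2 + 4*(1/3)*0) = 7/2 := by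
    rw [max_eq_right] <;> norm_num
  rw [this] at h
  norm_num at h

lemma no_conv_B2_B3 : ¬ Conv B2 B3 := by
  rintro ⟨τ, hτ, heq⟩
  have h := main_bound B2 isBox_B2 (1/3) (7/2) 0 (by norm_num) chsh_B2
    (fun s => by rw [margA_B2]; norm_num) (fun t => by rw [margB_B2]; norm_num) τ hτ
  rw [heq, phi13_B3] at h
  have : max (2 + 4*((1:ℝ)/3)) (7/2 + 4*(1/3)*0) = 7/2 := by
    rw [max_eq_right] <;> norm_num
  rw [this] at h
  norm_num at h

lemma no_conv_B3_B2 : ¬ Conv B3 B2 := by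
  rintro ⟨τ, hτ, heq⟩
  have h := main_bound B3 isBox_B3 0 (14/5) 1 le_rfl chsh_B3
    (fun s => by rw [margA_B3, abs_of_nonneg] <;> norm_num)
    (fun t => by rw [margB_B3, abs_of_nonneg] <;> norm_num) τ hτ
  rw [heq, phi0_B2] at h
  have : max (2 + 4*(0:ℝ)) (14/5 + 4*0*1) = 14/5 := by norm_num
  rw [this] at h
  norm_num at h

lemma no_conv_B3_B1 : ¬ Conv B3 B1 := by
  rintro ⟨τ, hτ, heq⟩
  have h := main_bound B3 isBox_B3 (1/3) (14/5) (3/5) (by norm_num) chsh_B3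
    (fun s => by rw [margA_B3, abs_of_nonneg] <;> norm_num)
    (fun t => by rw [margB_B3, abs_of_nonneg] <;> norm_num) τ hτ
  rw [heq, phi13_B1] at h
  have : max (2 + 4*((1:ℝ)/3)) (14/5 + 4*(1/3)*(3/5)) = 18/5 := by
    rw [max_eq_right] <;> norm_num
  rw [this] at h
  norm_num at h


/-- The incomparability relation of the LOSR pre-order on CHSH-type common-cause boxes
is not transitive (and in particular the pre-order is not total): there are boxes
`R₁, R₂, R₃` with `R₁, R₂` incomparable and `R₂, R₃` incomparable, while `R₁` converts
to `R₃` but not conversely. -/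
theorem stmt_16 :
    ∃ R₁ R₂ R₃ : Box, IsBox R₁ ∧ IsBox R₂ ∧ IsBox R₃ ∧
      ¬ Conv R₁ R₂ ∧ ¬ Conv R₂ R₁ ∧
      ¬ Conv R₂ R₃ ∧ ¬ Conv R₃ R₂ ∧
      Conv R₁ R₃ ∧ ¬ Conv R₃ R₁ := by
  exact ⟨B1, B2, B3, isBox_B1, isBox_B2, isBox_B3, no_conv_B1_B2, no_conv_B2_B1,
    no_conv_B2_B3, no_conv_B3_B2, conv_B1_B3, no_conv_B3_B1⟩

end
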